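/- Let 1 < p ≤ 2 and let w, w' ∈ ℝ^d satisfy ‖w‖_2 ≤ M and ‖w'‖_2 ≤ M with M = (B/λ)^{1/p}. If ‖w‖_p^p + ‖w'‖_p^p − 2‖(w + w')/2‖_p^p ≤ K·ε for constants K, ε ≥ 0, then ‖w − w'‖_2^2 ≤ (4/(p(p−1))) · M^{2−p} · K·ε. -/

import Mathlib

open Real Filter

lemma aux_hasDerivAt_abs_rpow (p : ℝ) (hp : 1 < p) (x : ℝ) :
    HasDerivAt (fun y : ℝ => |y| ^ p) (Real.sign x * (p * |x| ^ (p - 1))) x := by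
  rcases lt_trichotomy x 0 with hx | hx | hx
  · have h1 : HasDerivAt (fun y : ℝ => (-y) ^ p) (p * (-x) ^ (p - 1) * (-1)) x := by
      have := (Real.hasDerivAt_rpow_const (x := -x) (p := p) (Or.inl (by linarith))).comp x
        (hasDerivAt_neg x)
      simpa [Function.comp_def] using this
    have h2 : (fun y : ℝ => (-y) ^ p) =ᶠ[nhds x] (fun y : ℝ => |y| ^ p) := by
      filter_upwards [eventually_lt_nhds hx] with y hy
      rw [abs_of_neg hy]
    have := h1.congr_of_eventuallyEq h2.symm
    have hv : Real.sign x * (p * |x| ^ (p - 1)) = p * (-x) ^ (p - 1) * (-1) := by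
      rw [Real.sign_of_neg hx, abs_of_neg hx]; ring
    rw [hv]; exact this
  · subst hx
    rw [Real.sign_zero, zero_mul]
    rw [hasDerivAt_iff_tendsto_slope]
    have habs : Tendsto (fun y : ℝ => |y| ^ (p - 1)) (nhdsWithin 0 {(0:ℝ)}ᶜ) (nhds 0) := by
      have hc : ContinuousAt (fun y : ℝ => |y| ^ (p - 1)) 0 := by
        have h1 : ContinuousAt (fun u : ℝ => u ^ (p - 1)) |(0:ℝ)| :=
          Real.continuousAt_rpow_const _ (p-1) (Or.inr (by linarith))
        exact h1.comp continuous_abs.continuousAt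
      have := hc.continuousWithinAt (s := {(0:ℝ)}ᶜ)
      simpa [Real.zero_rpow (show p - 1 ≠ 0 by linarith)] using this.tendsto
    apply squeeze_zero_norm _ habs
    intro y
    rcases eq_or_ne y 0 with rfl | hy
    · simp [Real.zero_rpow (show p - 1 ≠ 0 by linarith), slope]
    · have hyp : (0:ℝ) < |y| := abs_pos.mpr hy
      have : slope (fun y : ℝ => |y| ^ p) 0 y = |y| ^ p / y := by
        simp [slope, Real.zero_rpow (show p ≠ 0 by linarith)]
        ring
      rw [this, Real.norm_eq_abs]
      rw [abs_div, abs_of_nonneg (Real.rpow_nonneg (abs_nonneg y) p)]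
      have hsp : |y| ^ (p-1) * |y| ^ (1:ℝ) = |y| ^ p := by
        rw [← Real.rpow_add hyp]; norm_num
      rw [Real.rpow_one] at hsp
      rw [← hsp, mul_div_assoc, div_self hyp.ne', mul_one]
  · have h1 : HasDerivAt (fun y : ℝ => y ^ p) (p * x ^ (p - 1)) x :=
      Real.hasDerivAt_rpow_const (Or.inl hx.ne')
    have h2 : (fun y : ℝ => y ^ p) =ᶠ[nhds x] (fun y : ℝ => |y| ^ p) := by
      filter_upwards [eventually_gt_nhds hx] with y hy
      rw [abs_of_pos hy]
    have := h1.congr_of_eventuallyEq h2.symm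
    have hv : Real.sign x * (p * |x| ^ (p - 1)) = p * x ^ (p - 1) := by
      rw [Real.sign_of_pos hx, abs_of_pos hx]; ring
    rw [hv]; exact this

lemma aux_key (p M : ℝ) (hp1 : 1 < p) (hp2 : p ≤ 2) (hM : 0 < M) (a b : ℝ)
    (ha : |a| ≤ M) (hb : |b| ≤ M) :
    p * (p - 1) * M ^ (p - 2) / 4 * (a - b) ^ 2
      ≤ |a| ^ p + |b| ^ p - 2 * |(a + b) / 2| ^ p := by
  set c : ℝ := p * (p - 1) / 2 * M ^ (p - 2) with hc
  have hppos : 0 < p * (p - 1) := by nlinarith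
  have hcpos : 0 < c := by
    have := Real.rpow_pos_of_pos hM (p - 2)
    positivity
  set g : ℝ → ℝ := fun x => |x| ^ p - c * x ^ 2 with hg
  set g' : ℝ → ℝ := fun x => Real.sign x * (p * |x| ^ (p - 1)) - 2 * c * x with hg'
  have hgd : ∀ x, HasDerivAt g (g' x) x := by
    intro x
    have h2 : HasDerivAt (fun x : ℝ => c * x ^ 2) (2 * c * x) x := by
      have := (hasDerivAt_pow 2 x).const_mul c
      exact this.congr_deriv (by push_cast; ring)
    exact (aux_hasDerivAt_abs_rpow p hp1 x).sub h2
  -- u is g' restricted to nonneg reals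
  set u : ℝ → ℝ := fun x => p * x ^ (p - 1) - 2 * c * x with hu
  have hu0 : u 0 = 0 := by
    simp [hu, Real.zero_rpow (show p - 1 ≠ 0 by linarith)]
  have humono : MonotoneOn u (Set.Icc 0 M) := by
    apply monotoneOn_of_hasDerivWithinAt_nonneg (f' := fun x => p * ((p-1) * x ^ (p - 2)) - 2 * c)
      (convex_Icc 0 M)
    · apply ContinuousOn.sub _ (by fun_prop)
      apply ContinuousOn.mul continuousOn_const
      intro x hx
      exact (Real.continuousAt_rpow_const x (p-1) (Or.inr (by linarith))).continuousWithinAt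
    · intro x hx
      rw [interior_Icc] at hx
      have hd : HasDerivAt u (p * ((p - 1) * x ^ (p - 2)) - 2 * c) x := by
        have h1 := (Real.hasDerivAt_rpow_const (p := p - 1) (Or.inl hx.1.ne')).const_mul p
        have h2 : HasDerivAt (fun x : ℝ => 2 * c * x) (2 * c) x := by
          simpa using (hasDerivAt_id x).const_mul (2*c)
        have := h1.sub h2
        exact this.congr_deriv (by rw [show p - 1 - 1 = p - 2 by ring])
      exact hd.hasDerivWithinAt
    · intro x hx
      rw [interior_Icc] at hx
      have hxM : M ^ (p - 2) ≤ x ^ (p - 2) :=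
        Real.rpow_le_rpow_of_nonpos hx.1 hx.2.le (by linarith)
      have : 2 * c ≤ p * ((p - 1) * x ^ (p - 2)) := by
        rw [hc]
        have : p * (p - 1) * M ^ (p - 2) ≤ p * (p - 1) * x ^ (p - 2) := by
          exact mul_le_mul_of_nonneg_left hxM hppos.le
        nlinarith
      linarith
  have hupos : ∀ x ∈ Set.Icc (0:ℝ) M, 0 ≤ u x := by
    intro x hx
    rw [← hu0]
    exact humono (Set.left_mem_Icc.mpr hM.le) hx hx.1
  have hg'u : ∀ x, 0 ≤ x → g' x = u x := by
    intro x hx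
    rcases hx.lt_or_eq with h | h
    · simp [hg', hu, Real.sign_of_pos h, abs_of_pos h]
    · simp [hg', hu, ← h, Real.zero_rpow (show p - 1 ≠ 0 by linarith)]
  have hg'neg : ∀ x, x < 0 → g' x = - u (-x) := by
    intro x hx
    simp only [hg', hu, Real.sign_of_neg hx, abs_of_neg hx]
    ring
  have hg'mono : MonotoneOn g' (Set.Icc (-M) M) := by
    intro x hx y hy hxy
    have hxM : -x ≤ M := by linarith [hx.1]
    have hyM : y ≤ M := hy.2
    rcases le_or_gt 0 x with h0x | h0x
    · rw [hg'u x h0x, hg'u y (h0x.trans hxy)]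
      exact humono ⟨h0x, hx.2⟩ ⟨h0x.trans hxy, hy.2⟩ hxy
    · rw [hg'neg x h0x]
      have hnx : -x ∈ Set.Icc (0:ℝ) M := ⟨by linarith, hxM⟩
      rcases le_or_gt 0 y with h0y | h0y
      · rw [hg'u y h0y]
        have h1 : 0 ≤ u (-x) := hupos _ hnx
        have h2 : 0 ≤ u y := hupos _ ⟨h0y, hyM⟩
        linarith
      · rw [hg'neg y h0y]
        have : u (-y) ≤ u (-x) :=
          humono ⟨by linarith, by linarith [hy.1]⟩ hnx (by linarith)
        linarith
  have hgconv : ConvexOn ℝ (Set.Icc (-M) M) g := by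
    apply MonotoneOn.convexOn_of_deriv (convex_Icc _ _)
    · exact fun x _ => (hgd x).continuousAt.continuousWithinAt
    · exact fun x _ => (hgd x).differentiableAt.differentiableWithinAt
    · rw [interior_Icc]
      have : ∀ x, deriv g x = g' x := fun x => (hgd x).deriv
      intro x hx y hy hxy
      rw [this, this]
      exact hg'mono (Set.Ioo_subset_Icc_self hx) (Set.Ioo_subset_Icc_self hy) hxy
  have haM : a ∈ Set.Icc (-M) M := abs_le.mp ha
  have hbM : b ∈ Set.Icc (-M) M := abs_le.mp hb
  have hmid := hgconv.2 haM hbM (by norm_num : (0:ℝ) ≤ 1/2) (by norm_num : (0:ℝ) ≤ 1/2)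
    (by norm_num)
  simp only [smul_eq_mul] at hmid
  have heq : (1/2 : ℝ) * a + (1/2 : ℝ) * b = (a + b) / 2 := by ring
  rw [heq] at hmid
  simp only [hg] at hmid
  have hc4 : p * (p - 1) * M ^ (p - 2) / 4 = c / 2 := by rw [hc]; ring
  rw [hc4]
  nlinarith [hmid]


/-- Strong-convexity consequence: for `1 < p ≤ 2`, `‖w‖₂, ‖w'‖₂ ≤ M = (B/λ)^(1/p)`, if
`‖w‖_p^p + ‖w'‖_p^p − 2‖(w+w')/2‖_p^p ≤ K ε` then
`‖w − w'‖₂² ≤ (4/(p(p−1))) M^(2−p) K ε`. -/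
theorem stmt_18 (d : ℕ) (p B lam K ε : ℝ) (hp1 : 1 < p) (hp2 : p ≤ 2)
    (hB : 0 < B) (hlam : 0 < lam) (hK : 0 ≤ K) (hε : 0 ≤ ε)
    (w w' : Fin d → ℝ)
    (hw : Real.sqrt (∑ j, (w j) ^ 2) ≤ (B / lam) ^ (1 / p))
    (hw' : Real.sqrt (∑ j, (w' j) ^ 2) ≤ (B / lam) ^ (1 / p))
    (hgap : ∑ j, |w j| ^ p + ∑ j, |w' j| ^ p - 2 * ∑ j, |(w j + w' j) / 2| ^ p ≤ K * ε) :
    ∑ j, (w j - w' j) ^ 2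
      ≤ (4 / (p * (p - 1))) * ((B / lam) ^ (1 / p)) ^ (2 - p) * (K * ε) := by
  set M : ℝ := (B / lam) ^ (1 / p) with hMdef
  have hM : 0 < M := Real.rpow_pos_of_pos (div_pos hB hlam) _
  -- coordinatewise bounds
  have hbound : ∀ (v : Fin d → ℝ), Real.sqrt (∑ j, (v j) ^ 2) ≤ M → ∀ j, |v j| ≤ M := by
    intro v hv j
    have h1 : (v j) ^ 2 ≤ ∑ i, (v i) ^ 2 :=
      Finset.single_le_sum (fun i _ => sq_nonneg (v i)) (Finset.mem_univ j)
    calc |v j| = Real.sqrt ((v j) ^ 2) := (Real.sqrt_sq_eq_abs _).symm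
    _ ≤ Real.sqrt (∑ i, (v i) ^ 2) := Real.sqrt_le_sqrt h1
    _ ≤ M := hv
  have hwb := hbound w hw
  have hwb' := hbound w' hw'
  set c2 : ℝ := p * (p - 1) * M ^ (p - 2) / 4 with hc2
  have hkey : ∀ j, c2 * (w j - w' j) ^ 2
      ≤ |w j| ^ p + |w' j| ^ p - 2 * |(w j + w' j) / 2| ^ p :=
    fun j => aux_key p M hp1 hp2 hM (w j) (w' j) (hwb j) (hwb' j)
  have hsum : c2 * ∑ j, (w j - w' j) ^ 2 ≤ K * ε := by
    rw [Finset.mul_sum]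
    calc ∑ j, c2 * (w j - w' j) ^ 2
        ≤ ∑ j, (|w j| ^ p + |w' j| ^ p - 2 * |(w j + w' j) / 2| ^ p) :=
          Finset.sum_le_sum (fun j _ => hkey j)
      _ = ∑ j, |w j| ^ p + ∑ j, |w' j| ^ p - 2 * ∑ j, |(w j + w' j) / 2| ^ p := by
          rw [Finset.sum_sub_distrib, Finset.sum_add_distrib, Finset.mul_sum]
      _ ≤ K * ε := hgap
  have hppos : 0 < p * (p - 1) := by nlinarith
  have hLpos : 0 < M ^ (p - 2) := Real.rpow_pos_of_pos hM _
  have hc2pos : 0 < c2 := by rw [hc2]; positivity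
  have hMinv : M ^ (2 - p) = (M ^ (p - 2))⁻¹ := by
    rw [show (2 - p) = -(p - 2) by ring, Real.rpow_neg hM.le]
  rw [hMinv]
  have hsum2 : ∑ j, (w j - w' j) ^ 2 ≤ K * ε / c2 :=
    (le_div_iff₀' hc2pos).mpr hsum
  calc ∑ j, (w j - w' j) ^ 2 ≤ K * ε / c2 := hsum2
    _ = 4 / (p * (p - 1)) * (M ^ (p - 2))⁻¹ * (K * ε) := by
        rw [hc2]; field_simp
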